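/- Let D₁, D₂ > 0, r₁, r₂ > 0, ĥ₁, ĥ₂, ĝ₂ > 0, n > 0 and L₀ > 0. Suppose U₁, U₂ : [0, L₀] → ℝ are twice continuously differentiable, with Uᵢ(0) = Uᵢ(L₀) = 0, Uᵢ(ξ) > 0 for ξ ∈ (0, L₀), D₁ U₁''(ξ) + U₁(ξ)(r₁ − (ĥ₁ U₁(ξ))ⁿ) = 0 and D₂ U₂''(ξ) + U₂(ξ)(r₂ − (ĥ₂ U₂(ξ))ⁿ) = 0 for all ξ ∈ (0, L₀). If r₂/r₁ ≥ D₂/D₁ and (r₂/r₁)^{1/n} ĥ₁ ≥ ĝ₂, then ĝ₂ U₁(ξ) ≤ ĥ₂ U₂(ξ) for all ξ ∈ [0, L₀]. -/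

import Mathlib

open Set Real MeasureTheory intervalIntegral Topology Filter
set_option maxHeartbeats 2000000

/-- extend a ≤ from the open interval to the closed one by continuity -/
lemma aux_le_closure {f g : ℝ → ℝ} {a b : ℝ} (hab : a < b)
    (hf : ContinuousOn f (Icc a b)) (hg : ContinuousOn g (Icc a b))
    (h : ∀ x ∈ Ioo a b, f x ≤ g x) : ∀ x ∈ Icc a b, f x ≤ g x := by
  intro x hx
  have hcl : x ∈ closure (Ioo a b) := by
    rw [closure_Ioo hab.ne]; exact hx
  have hne : (𝓝[Ioo a b] x).NeBot := mem_closure_iff_nhdsWithin_neBot.1 hcl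
  have hfx : Filter.Tendsto f (𝓝[Ioo a b] x) (𝓝 (f x)) :=
    (hf x hx).mono_left (nhdsWithin_mono _ Ioo_subset_Icc_self)
  have hgx : Filter.Tendsto g (𝓝[Ioo a b] x) (𝓝 (g x)) :=
    (hg x hx).mono_left (nhdsWithin_mono _ Ioo_subset_Icc_self)
  exact le_of_tendsto_of_tendsto hfx hgx
    (Filter.eventually_iff_exists_mem.2 ⟨Ioo a b, self_mem_nhdsWithin, h⟩)

/-- second derivative test : local max at an interior point has nonpositive 2nd derivative -/
lemma aux_deriv2_nonpos {f f' : ℝ → ℝ} {a b x c : ℝ} (hx : x ∈ Ioo a b)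
    (hf : ∀ y ∈ Ioo a b, HasDerivAt f (f' y) y) (hf' : HasDerivAt f' c x)
    (hmax : IsLocalMax f x) : c ≤ 0 := by
  by_contra hc
  push_neg at hc
  have hfx0 : f' x = 0 := by
    have := hmax.deriv_eq_zero
    rwa [(hf x hx).deriv] at this
  have hslope : Filter.Tendsto (slope f' x) (𝓝[≠] x) (𝓝 c) :=
    hasDerivAt_iff_tendsto_slope.1 hf'
  have hev : ∀ᶠ y in 𝓝[>] x, 0 < slope f' x y :=
    (hslope.mono_left (nhdsWithin_mono _ fun y hy => ne_of_gt hy)).eventually_const_lt hc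
  have hev2 : ∀ᶠ y in 𝓝[>] x, y ∈ Ioo a b :=
    eventually_nhdsWithin_of_eventually_nhds (Ioo_mem_nhds hx.1 hx.2)
  have hev3 : ∀ᶠ y in 𝓝[>] x, f y ≤ f x := eventually_nhdsWithin_of_eventually_nhds hmax
  obtain ⟨u, hu, hsub⟩ := mem_nhdsGT_iff_exists_Ioo_subset.1
    ((hev.and (hev2.and hev3)).filter_mono le_rfl)
  obtain ⟨y₀, hy₀⟩ := nonempty_Ioo.2 (show x < u from hu)
  obtain ⟨hs1, hs2, hs3⟩ := hsub hy₀
  -- f is strictly monotone on [x, y₀]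
  have hmono : StrictMonoOn f (Icc x y₀) := by
    apply strictMonoOn_of_deriv_pos (convex_Icc _ _)
    · intro z hz
      have hzio : z ∈ Ioo a b := ⟨lt_of_lt_of_le hx.1 hz.1, lt_of_le_of_lt hz.2 hs2.2⟩
      exact (hf z hzio).continuousAt.continuousWithinAt
    · intro z hz
      rw [interior_Icc] at hz
      have hzsub := hsub ⟨hz.1, lt_of_lt_of_le hz.2 (le_of_lt hy₀.2)⟩
      have hzio : z ∈ Ioo a b := hzsub.2.1
      rw [(hf z hzio).deriv]
      have hsl := hzsub.1
      rw [slope_def_field] at hsl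
      have hzx : 0 < z - x := sub_pos.2 hz.1
      have h2 := mul_pos hsl hzx
      rw [div_mul_cancel₀ _ (ne_of_gt hzx)] at h2
      linarith
  have : f x < f y₀ := hmono (left_mem_Icc.2 (le_of_lt hy₀.1)) (right_mem_Icc.2 (le_of_lt hy₀.1)) hy₀.1
  exact absurd hs3 (not_le.2 this)

lemma aux_deriv2_nonneg {f f' : ℝ → ℝ} {a b x c : ℝ} (hx : x ∈ Ioo a b)
    (hf : ∀ y ∈ Ioo a b, HasDerivAt f (f' y) y) (hf' : HasDerivAt f' c x)
    (hmin : IsLocalMin f x) : 0 ≤ c := by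
  have := aux_deriv2_nonpos hx (fun y hy => (hf y hy).neg) hf'.neg hmin.neg
  linarith

/-- FTC on a subinterval of [0,L] -/
lemma aux_ftc {f g : ℝ → ℝ} {L u v : ℝ} (hu : 0 ≤ u) (huv : u ≤ v) (hv : v ≤ L)
    (hf : ContinuousOn f (Icc 0 L)) (hg : ContinuousOn g (Icc 0 L))
    (hd : ∀ x ∈ Ioo 0 L, HasDerivAt f (g x) x) :
    ∫ t in u..v, g t = f v - f u := by
  have hsub : Icc u v ⊆ Icc 0 L := Icc_subset_Icc hu hv
  apply integral_eq_sub_of_hasDeriv_right_of_le huv (hf.mono hsub)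
  · intro x hx
    exact (hd x ⟨lt_of_le_of_lt hu hx.1, lt_of_lt_of_le hx.2 hv⟩).hasDerivWithinAt
  · apply ContinuousOn.intervalIntegrable
    rw [uIcc_of_le huv]
    exact hg.mono hsub

/-- the one-sided derivative at the left endpoint of a nonnegative function vanishing there
is nonnegative -/
lemma aux_left_deriv_nonneg {w : ℝ → ℝ} {b d : ℝ} (hb : 0 < b)
    (h : HasDerivWithinAt w d (Icc 0 b) 0) (hnn : ∀ x ∈ Icc 0 b, 0 ≤ w x)
    (hw0 : w 0 = 0) : 0 ≤ d := by
  have h' : HasDerivWithinAt w d (Ioo 0 b) 0 := h.mono Ioo_subset_Icc_self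
  have hsl : Tendsto (slope w 0) (𝓝[Ioo 0 b] 0) (𝓝 d) :=
    (hasDerivWithinAt_iff_tendsto_slope' (by simp)).1 h'
  have hne : (𝓝[Ioo 0 b] (0:ℝ)).NeBot := by
    apply mem_closure_iff_nhdsWithin_neBot.1
    rw [closure_Ioo hb.ne]
    exact ⟨le_rfl, hb.le⟩
  refine ge_of_tendsto hsl ?_
  refine Filter.eventually_iff_exists_mem.2 ⟨Ioo 0 b, self_mem_nhdsWithin, fun y hy => ?_⟩
  rw [slope_def_field, hw0, sub_zero, sub_zero]
  exact div_nonneg (hnn y (Ioo_subset_Icc_self hy)) hy.1.le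

/-- one-sided derivative at right endpoint of nonneg function vanishing there is ≤ 0 -/
lemma aux_right_deriv_nonpos {w : ℝ → ℝ} {b d : ℝ} (hb : 0 < b)
    (h : HasDerivWithinAt w d (Icc 0 b) b) (hnn : ∀ x ∈ Icc 0 b, 0 ≤ w x)
    (hwb : w b = 0) : d ≤ 0 := by
  have h' : HasDerivWithinAt w d (Ioo 0 b) b := h.mono Ioo_subset_Icc_self
  have hsl : Tendsto (slope w b) (𝓝[Ioo 0 b] b) (𝓝 d) :=
    (hasDerivWithinAt_iff_tendsto_slope' (by simp)).1 h'
  have hne : (𝓝[Ioo 0 b] b).NeBot := by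
    apply mem_closure_iff_nhdsWithin_neBot.1
    rw [closure_Ioo hb.ne]
    exact ⟨hb.le, le_rfl⟩
  refine le_of_tendsto hsl ?_
  refine Filter.eventually_iff_exists_mem.2 ⟨Ioo 0 b, self_mem_nhdsWithin, fun y hy => ?_⟩
  rw [slope_def_field, hwb, sub_zero]
  apply div_nonpos_of_nonneg_of_nonpos (hnn y (Ioo_subset_Icc_self hy))
  linarith [hy.2]

/-- MVT bound : a·aⁿ − b·bⁿ ≤ (n+1)Mⁿ(a−b) for 0 ≤ b ≤ a ≤ M -/
lemma aux_rpow_mvt {n M a b : ℝ} (hn : 0 < n) (hb : 0 ≤ b) (hba : b ≤ a) (haM : a ≤ M) :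
    a * a ^ n - b * b ^ n ≤ (n + 1) * M ^ n * (a - b) := by
  rcases eq_or_lt_of_le hba with rfl | hlt
  · simp
  have ha : 0 ≤ a := hb.trans hba
  have hM : 0 ≤ M := ha.trans haM
  have key : ∀ x : ℝ, 0 ≤ x → x * x ^ n = x ^ (n + 1) := by
    intro x hx
    rcases eq_or_lt_of_le hx with rfl | hx'
    · rw [Real.zero_rpow (show n + 1 ≠ 0 by positivity), Real.zero_rpow hn.ne', mul_zero]
    · rw [Real.rpow_add hx', Real.rpow_one, mul_comm]
  have hder : ∀ x ∈ Ioo b a, HasDerivAt (fun y : ℝ => y ^ (n + 1))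
      ((n + 1) * x ^ (n + 1 - 1)) x := by
    intro x _
    exact Real.hasDerivAt_rpow_const (Or.inr (by linarith))
  have hcont : ContinuousOn (fun y : ℝ => y ^ (n + 1)) (Icc b a) := by
    intro x _
    exact (Real.continuousAt_rpow_const x (n+1) (Or.inr (by linarith))).continuousWithinAt
  obtain ⟨c, hc, hceq⟩ := exists_hasDerivAt_eq_slope (fun y : ℝ => y ^ (n + 1))
    _ hlt hcont hder
  have hc0 : 0 ≤ c := hb.trans hc.1.le
  have hcM : c ≤ M := hc.2.le.trans haM
  rw [add_sub_cancel_right] at hceq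
  have hpow : c ^ n ≤ M ^ n := Real.rpow_le_rpow hc0 hcM hn.le
  have hab : 0 < a - b := sub_pos.2 hlt
  rw [key a ha, key b hb]
  have hn1 : (0:ℝ) ≤ n + 1 := by linarith
  have h2 : a ^ (n+1) - b ^ (n+1) = (n + 1) * c ^ n * (a - b) := by
    field_simp at hceq
    linarith [hceq]
  rw [h2]
  exact mul_le_mul_of_nonneg_right (mul_le_mul_of_nonneg_left hpow hn1) hab.le

/-- Grönwall-type lemma, left endpoint version: if w ≥ 0 on [0,b], w(0)=0, w'(0)=0 (g is the
derivative, h the second derivative) and w'' ≤ K w, then w ≡ 0. -/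
lemma aux_gronwall_left {w g h : ℝ → ℝ} {b K : ℝ} (hb : 0 < b) (hK : 0 ≤ K)
    (hw : ContinuousOn w (Icc 0 b)) (hg : ContinuousOn g (Icc 0 b))
    (hh : ContinuousOn h (Icc 0 b))
    (hdw : ∀ x ∈ Ioo 0 b, HasDerivAt w (g x) x) (hdg : ∀ x ∈ Ioo 0 b, HasDerivAt g (h x) x)
    (hbd : ∀ x ∈ Icc 0 b, h x ≤ K * w x) (hnn : ∀ x ∈ Icc 0 b, 0 ≤ w x)
    (hw0 : w 0 = 0) (hg0 : g 0 = 0) : ∀ x ∈ Icc 0 b, w x = 0 := by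
  set G : ℝ → ℝ := fun x => ∫ t in (0:ℝ)..x, w t with hG
  have hwint : ∀ u v : ℝ, 0 ≤ u → u ≤ v → v ≤ b → IntervalIntegrable w volume u v := by
    intro u v hu huv hv
    apply ContinuousOn.intervalIntegrable
    rw [uIcc_of_le huv]
    exact hw.mono (Icc_subset_Icc hu hv)
  -- G is continuous on [0,b]
  have hGcont : ContinuousOn G (Icc 0 b) := by
    have : ContinuousOn G (uIcc 0 b) := by
      apply intervalIntegral.continuousOn_primitive_interval'
      · exact hwint 0 b le_rfl hb.le le_rfl
      · exact left_mem_uIcc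
    rwa [uIcc_of_le hb.le] at this
  -- G is nonneg and monotone
  have hGnn : ∀ x ∈ Icc 0 b, 0 ≤ G x := by
    intro x hx
    apply intervalIntegral.integral_nonneg hx.1
    intro t ht
    exact hnn t ⟨ht.1, ht.2.trans hx.2⟩
  have hGmono : ∀ u v, 0 ≤ u → u ≤ v → v ≤ b → G u ≤ G v := by
    intro u v hu huv hv
    have : G v - G u = ∫ t in u..v, w t := by
      rw [hG]
      simp only
      rw [← intervalIntegral.integral_add_adjacent_intervals
        (hwint 0 u le_rfl hu (huv.trans hv)) (hwint u v hu huv hv)]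
      ring
    have h2 : 0 ≤ ∫ t in u..v, w t := by
      apply intervalIntegral.integral_nonneg huv
      intro t ht
      exact hnn t ⟨hu.trans ht.1, ht.2.trans hv⟩
    linarith
  -- g x = ∫ h ≤ K * G x
  have hgle : ∀ x ∈ Icc 0 b, g x ≤ K * G x := by
    intro x hx
    have h1 : ∫ t in (0:ℝ)..x, h t = g x - g 0 :=
      aux_ftc le_rfl hx.1 hx.2 hg hh hdg
    have h2 : (∫ t in (0:ℝ)..x, h t) ≤ ∫ t in (0:ℝ)..x, K * w t := by
      apply intervalIntegral.integral_mono_on hx.1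
      · apply ContinuousOn.intervalIntegrable
        rw [uIcc_of_le hx.1]
        exact hh.mono (Icc_subset_Icc le_rfl hx.2)
      · apply ContinuousOn.intervalIntegrable
        rw [uIcc_of_le hx.1]
        exact (hw.mono (Icc_subset_Icc le_rfl hx.2)).const_smul K
      · intro t ht
        exact hbd t ⟨ht.1, ht.2.trans hx.2⟩
    rw [h1, hg0, sub_zero] at *
    calc g x ≤ ∫ t in (0:ℝ)..x, K * w t := by rw [← h1]; exact h2
      _ = K * G x := by rw [intervalIntegral.integral_const_mul]
  -- w x ≤ K * b * G x
  have hwle : ∀ x ∈ Icc 0 b, w x ≤ K * b * G x := by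
    intro x hx
    have h1 : ∫ t in (0:ℝ)..x, g t = w x - w 0 :=
      aux_ftc le_rfl hx.1 hx.2 hw hg hdw
    have h2 : (∫ t in (0:ℝ)..x, g t) ≤ ∫ t in (0:ℝ)..x, K * G x := by
      apply intervalIntegral.integral_mono_on hx.1
      · apply ContinuousOn.intervalIntegrable
        rw [uIcc_of_le hx.1]
        exact hg.mono (Icc_subset_Icc le_rfl hx.2)
      · exact intervalIntegrable_const
      · intro t ht
        calc g t ≤ K * G t := hgle t ⟨ht.1, ht.2.trans hx.2⟩
          _ ≤ K * G x := by
            apply mul_le_mul_of_nonneg_left _ hK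
            exact hGmono t x ht.1 ht.2 hx.2
    rw [h1, hw0, sub_zero] at h2
    rw [intervalIntegral.integral_const, smul_eq_mul, sub_zero] at h2
    have hGx := hGnn x hx
    have h3 : x * (K * G x) ≤ b * (K * G x) :=
      mul_le_mul_of_nonneg_right hx.2 (mul_nonneg hK hGx)
    nlinarith
  -- exponential trick : P = exp(-Cx) G x is antitone
  set C : ℝ := K * b with hC
  have hC0 : 0 ≤ C := mul_nonneg hK hb.le
  set P : ℝ → ℝ := fun x => Real.exp (-(C * x)) * G x with hP
  have hPd : ∀ x ∈ Ioo 0 b, HasDerivAt P (Real.exp (-(C * x)) * (w x - C * G x)) x := by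
    intro x hx
    have hGd : HasDerivAt G (w x) x := by
      apply intervalIntegral.integral_hasDerivAt_right
        (hwint 0 x le_rfl hx.1.le hx.2.le)
      · exact (hw.mono Ioo_subset_Icc_self).stronglyMeasurableAtFilter isOpen_Ioo x hx
      · exact (hw x (Ioo_subset_Icc_self hx)).continuousAt (Icc_mem_nhds hx.1 hx.2)
    have he : HasDerivAt (fun y => Real.exp (-(C * y))) (Real.exp (-(C * x)) * (-C)) x := by
      have h1 : HasDerivAt (fun y : ℝ => -(C * y)) (-C) x := by
        have := ((hasDerivAt_id x).const_mul C).neg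
        simp only [mul_one] at this
        exact this
      exact h1.exp
    have : HasDerivAt (fun y => Real.exp (-(C * y)) * G y) _ x := he.mul hGd
    convert this using 1
    ring
  have hPanti : AntitoneOn P (Icc 0 b) := by
    apply antitoneOn_of_deriv_nonpos (convex_Icc _ _)
    · apply ContinuousOn.mul _ hGcont
      exact (Real.continuous_exp.comp (continuous_const.mul continuous_id).neg).continuousOn
    · intro x hx
      rw [interior_Icc] at hx
      exact (hPd x hx).differentiableAt.differentiableWithinAt
    · intro x hx
      rw [interior_Icc] at hx
      rw [(hPd x hx).deriv]
      have h1 := hwle x (Ioo_subset_Icc_self hx)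
      have h2 := Real.exp_pos (-(C * x))
      nlinarith
  -- conclude
  intro x hx
  have hP0 : P 0 = 0 := by
    simp [hP, hG]
  have := hPanti (left_mem_Icc.2 hb.le) hx hx.1
  rw [hP0] at this
  have hGx0 : G x ≤ 0 := by
    by_contra hpos
    push_neg at hpos
    have h2 := Real.exp_pos (-(C * x))
    have hthis : Real.exp (-(C * x)) * G x ≤ 0 := this
    nlinarith [mul_pos h2 hpos]
  have hGx := hGnn x hx
  have hGeq : G x = 0 := le_antisymm hGx0 hGx
  have hwx := hwle x hx
  have h3 : C * G x = 0 := by rw [hGeq]; ring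
  have hwnn := hnn x hx
  linarith

/-- Grönwall-type lemma, right endpoint version -/
lemma aux_gronwall_right {w g h : ℝ → ℝ} {b K : ℝ} (hb : 0 < b) (hK : 0 ≤ K)
    (hw : ContinuousOn w (Icc 0 b)) (hg : ContinuousOn g (Icc 0 b))
    (hh : ContinuousOn h (Icc 0 b))
    (hdw : ∀ x ∈ Ioo 0 b, HasDerivAt w (g x) x) (hdg : ∀ x ∈ Ioo 0 b, HasDerivAt g (h x) x)
    (hbd : ∀ x ∈ Icc 0 b, h x ≤ K * w x) (hnn : ∀ x ∈ Icc 0 b, 0 ≤ w x)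
    (hwb : w b = 0) (hgb : g b = 0) : ∀ x ∈ Icc 0 b, w x = 0 := by
  set G : ℝ → ℝ := fun x => ∫ t in x..b, w t with hG
  have hwint : ∀ u v : ℝ, 0 ≤ u → u ≤ v → v ≤ b → IntervalIntegrable w volume u v := by
    intro u v hu huv hv
    apply ContinuousOn.intervalIntegrable
    rw [uIcc_of_le huv]
    exact hw.mono (Icc_subset_Icc hu hv)
  have hGcont : ContinuousOn G (Icc 0 b) := by
    have : ContinuousOn G (uIcc 0 b) := by
      apply intervalIntegral.continuousOn_primitive_interval_left
      rw [uIcc_of_le hb.le]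
      exact hw.integrableOn_Icc
    rwa [uIcc_of_le hb.le] at this
  have hGnn : ∀ x ∈ Icc 0 b, 0 ≤ G x := by
    intro x hx
    apply intervalIntegral.integral_nonneg hx.2
    intro t ht
    exact hnn t ⟨hx.1.trans ht.1, ht.2⟩
  have hGanti : ∀ u v, 0 ≤ u → u ≤ v → v ≤ b → G v ≤ G u := by
    intro u v hu huv hv
    have : G u - G v = ∫ t in u..v, w t := by
      rw [hG]
      simp only
      rw [← intervalIntegral.integral_add_adjacent_intervals
        (hwint u v hu huv hv) (hwint v b (hu.trans huv) hv le_rfl)]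
      ring
    have h2 : 0 ≤ ∫ t in u..v, w t := by
      apply intervalIntegral.integral_nonneg huv
      intro t ht
      exact hnn t ⟨hu.trans ht.1, ht.2.trans hv⟩
    linarith
  -- -g x ≤ K * G x
  have hgle : ∀ x ∈ Icc 0 b, -g x ≤ K * G x := by
    intro x hx
    have h1 : ∫ t in x..b, h t = g b - g x :=
      aux_ftc hx.1 hx.2 le_rfl hg hh hdg
    have h2 : (∫ t in x..b, h t) ≤ ∫ t in x..b, K * w t := by
      apply intervalIntegral.integral_mono_on hx.2
      · apply ContinuousOn.intervalIntegrable
        rw [uIcc_of_le hx.2]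
        exact hh.mono (Icc_subset_Icc hx.1 le_rfl)
      · apply ContinuousOn.intervalIntegrable
        rw [uIcc_of_le hx.2]
        exact (hw.mono (Icc_subset_Icc hx.1 le_rfl)).const_smul K
      · intro t ht
        exact hbd t ⟨hx.1.trans ht.1, ht.2⟩
    rw [h1, hgb, zero_sub] at h2
    calc -g x ≤ ∫ t in x..b, K * w t := h2
      _ = K * G x := by rw [intervalIntegral.integral_const_mul]
  -- w x ≤ K * b * G x
  have hwle : ∀ x ∈ Icc 0 b, w x ≤ K * b * G x := by
    intro x hx
    have h1 : ∫ t in x..b, g t = w b - w x :=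
      aux_ftc hx.1 hx.2 le_rfl hw hg hdw
    have h2 : (∫ t in x..b, -g t) ≤ ∫ t in x..b, K * G x := by
      apply intervalIntegral.integral_mono_on hx.2
      · apply ContinuousOn.intervalIntegrable
        rw [uIcc_of_le hx.2]
        exact ((hg.mono (Icc_subset_Icc hx.1 le_rfl))).neg
      · exact intervalIntegrable_const
      · intro t ht
        calc -g t ≤ K * G t := hgle t ⟨hx.1.trans ht.1, ht.2⟩
          _ ≤ K * G x := by
            apply mul_le_mul_of_nonneg_left _ hK
            exact hGanti x t hx.1 ht.1 ht.2
    rw [intervalIntegral.integral_neg, h1, hwb, zero_sub, neg_neg] at h2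
    rw [intervalIntegral.integral_const, smul_eq_mul] at h2
    have hGx := hGnn x hx
    have h3 : (b - x) * (K * G x) ≤ b * (K * G x) := by
      apply mul_le_mul_of_nonneg_right _ (mul_nonneg hK hGx)
      linarith [hx.1]
    nlinarith
  set C : ℝ := K * b with hC
  have hC0 : 0 ≤ C := mul_nonneg hK hb.le
  set P : ℝ → ℝ := fun x => Real.exp (C * x) * G x with hP
  have hPd : ∀ x ∈ Ioo 0 b, HasDerivAt P (Real.exp (C * x) * (C * G x - w x)) x := by
    intro x hx
    have hGd : HasDerivAt G (-w x) x := by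
      apply intervalIntegral.integral_hasDerivAt_left
        (hwint x b hx.1.le hx.2.le le_rfl)
      · exact (hw.mono Ioo_subset_Icc_self).stronglyMeasurableAtFilter isOpen_Ioo x hx
      · exact (hw x (Ioo_subset_Icc_self hx)).continuousAt (Icc_mem_nhds hx.1 hx.2)
    have he : HasDerivAt (fun y => Real.exp (C * y)) (Real.exp (C * x) * C) x := by
      have h1 : HasDerivAt (fun y : ℝ => C * y) C x := by
        simpa using (hasDerivAt_id x).const_mul C
      exact h1.exp
    have : HasDerivAt (fun y => Real.exp (C * y) * G y) _ x := he.mul hGd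
    convert this using 1
    ring
  have hPmono : MonotoneOn P (Icc 0 b) := by
    apply monotoneOn_of_deriv_nonneg (convex_Icc _ _)
    · apply ContinuousOn.mul _ hGcont
      exact (Real.continuous_exp.comp (continuous_const.mul continuous_id)).continuousOn
    · intro x hx
      rw [interior_Icc] at hx
      exact (hPd x hx).differentiableAt.differentiableWithinAt
    · intro x hx
      rw [interior_Icc] at hx
      rw [(hPd x hx).deriv]
      have h1 := hwle x (Ioo_subset_Icc_self hx)
      have h2 := Real.exp_pos (C * x)
      nlinarith
  intro x hx
  have hPb : P b = 0 := by
    simp [hP, hG]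
  have := hPmono hx (right_mem_Icc.2 hb.le) hx.2
  rw [hPb] at this
  have hGx0 : G x ≤ 0 := by
    by_contra hpos
    push_neg at hpos
    have h2 := Real.exp_pos (C * x)
    have hthis : Real.exp (C * x) * G x ≤ 0 := this
    nlinarith [mul_pos h2 hpos]
  have hGx := hGnn x hx
  have hGeq : G x = 0 := le_antisymm hGx0 hGx
  have hwx := hwle x hx
  have h3 : C * G x = 0 := by rw [hGeq]; ring
  have hwnn := hnn x hx
  linarith

/-- The sweeping comparison principle: a nonnegative Dirichlet subsolution `Y` of the logistic
equation lies below the positive Dirichlet solution `U`. -/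
lemma aux_sweep {L D r h₂ n : ℝ} {U Y gU gY hU hY : ℝ → ℝ}
    (hL : 0 < L) (hD : 0 < D) (hr : 0 ≤ r) (hh₂ : 0 < h₂) (hn : 0 < n)
    (hUc : ContinuousOn U (Icc 0 L)) (hYc : ContinuousOn Y (Icc 0 L))
    (hgUc : ContinuousOn gU (Icc 0 L)) (hgYc : ContinuousOn gY (Icc 0 L))
    (hhUc : ContinuousOn hU (Icc 0 L)) (hhYc : ContinuousOn hY (Icc 0 L))
    (hdU : ∀ x ∈ Ioo 0 L, HasDerivAt U (gU x) x) (hdgU : ∀ x ∈ Ioo 0 L, HasDerivAt gU (hU x) x)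
    (hdY : ∀ x ∈ Ioo 0 L, HasDerivAt Y (gY x) x) (hdgY : ∀ x ∈ Ioo 0 L, HasDerivAt gY (hY x) x)
    (hdU0 : HasDerivWithinAt U (gU 0) (Icc 0 L) 0) (hdUL : HasDerivWithinAt U (gU L) (Icc 0 L) L)
    (hdY0 : HasDerivWithinAt Y (gY 0) (Icc 0 L) 0) (hdYL : HasDerivWithinAt Y (gY L) (Icc 0 L) L)
    (hU0 : U 0 = 0) (hUL : U L = 0) (hY0 : Y 0 = 0) (hYL : Y L = 0)
    (hUpos : ∀ x ∈ Ioo 0 L, 0 < U x) (hYnn : ∀ x ∈ Icc 0 L, 0 ≤ Y x)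
    (hsol : ∀ x ∈ Ioo 0 L, D * hU x + U x * (r - (h₂ * U x) ^ n) = 0)
    (hsub : ∀ x ∈ Ioo 0 L, 0 ≤ D * hY x + Y x * (r - (h₂ * Y x) ^ n)) :
    ∀ x ∈ Icc 0 L, Y x ≤ U x := by
  have hUnn : ∀ x ∈ Icc 0 L, 0 ≤ U x := by
    intro x hx
    rcases eq_or_lt_of_le hx.1 with h0 | h0
    · rw [← h0, hU0]
    rcases eq_or_lt_of_le hx.2 with hL' | hL'
    · rw [hL', hUL]
    exact (hUpos x ⟨h0, hL'⟩).le
  -- the max of U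
  obtain ⟨xM, hxM, hxMmax⟩ := isCompact_Icc.exists_isMaxOn
    (nonempty_Icc.2 hL.le) hUc
  set M : ℝ := U xM with hM
  have hMnn : 0 ≤ M := hUnn xM hxM
  have hUleM : ∀ x ∈ Icc 0 L, U x ≤ M := fun x hx => hxMmax hx
  -- the sweeping set
  set S : Set ℝ := {t | t ∈ Icc (0:ℝ) 1 ∧ ∀ x ∈ Icc 0 L, t * Y x ≤ U x} with hS
  have h0S : (0:ℝ) ∈ S := by
    refine ⟨⟨le_rfl, zero_le_one⟩, fun x hx => ?_⟩
    rw [zero_mul]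
    exact hUnn x hx
  have hSbdd : BddAbove S := ⟨1, fun t ht => ht.1.2⟩
  have hScl : IsClosed S := by
    have : S = Icc (0:ℝ) 1 ∩ ⋂ x ∈ Icc (0:ℝ) L, {t : ℝ | t * Y x ≤ U x} := by
      ext t
      simp [hS, mem_iInter]
    rw [this]
    apply isClosed_Icc.inter
    apply isClosed_biInter
    intro x _
    exact isClosed_le (continuous_id.mul continuous_const) continuous_const
  set T : ℝ := sSup S with hT
  have hTS : T ∈ S := hScl.csSup_mem ⟨0, h0S⟩ hSbdd
  have hT0 : 0 ≤ T := hTS.1.1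
  have hT1 : T ≤ 1 := hTS.1.2
  have hTle : ∀ x ∈ Icc 0 L, T * Y x ≤ U x := hTS.2
  -- main claim : T = 1
  have hTeq : T = 1 := by
    by_contra hne
    have hTlt : T < 1 := lt_of_le_of_ne hT1 hne
    obtain ⟨W, hW⟩ : ∃ W : ℝ → ℝ, W = fun x => U x - T * Y x := ⟨_, rfl⟩
    obtain ⟨gW, hgW⟩ : ∃ gW : ℝ → ℝ, gW = fun x => gU x - T * gY x := ⟨_, rfl⟩
    obtain ⟨hW2, hhW2⟩ : ∃ hW2 : ℝ → ℝ, hW2 = fun x => hU x - T * hY x := ⟨_, rfl⟩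
    have hWc : ContinuousOn W (Icc 0 L) := by
      rw [hW]; exact hUc.sub (hYc.const_smul T)
    have hgWc : ContinuousOn gW (Icc 0 L) := by
      rw [hgW]; exact hgUc.sub (hgYc.const_smul T)
    have hhWc : ContinuousOn hW2 (Icc 0 L) := by
      rw [hhW2]; exact hhUc.sub (hhYc.const_smul T)
    have hdW : ∀ x ∈ Ioo 0 L, HasDerivAt W (gW x) x := by
      intro x hx
      rw [hW, hgW]
      exact (hdU x hx).sub ((hdY x hx).const_mul T)
    have hdgW : ∀ x ∈ Ioo 0 L, HasDerivAt gW (hW2 x) x := by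
      intro x hx
      rw [hgW, hhW2]
      exact (hdgU x hx).sub ((hdgY x hx).const_mul T)
    have hWnn : ∀ x ∈ Icc 0 L, 0 ≤ W x := by
      intro x hx
      have := hTle x hx
      simp only [hW]
      linarith
    have hW0 : W 0 = 0 := by simp [hW, hU0, hY0]
    have hWL : W L = 0 := by simp [hW, hUL, hYL]
    set K : ℝ := h₂ ^ n * (n + 1) * M ^ n / D with hK
    have hKnn : 0 ≤ K := by
      apply div_nonneg _ hD.le
      have h1 := Real.rpow_nonneg hh₂.le n
      have h2 := Real.rpow_nonneg hMnn n
      have h3 : (0:ℝ) ≤ n + 1 := by linarith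
      exact mul_nonneg (mul_nonneg h1 h3) h2
    -- the key differential inequality
    have hbd : ∀ x ∈ Ioo 0 L, hW2 x ≤ K * W x := by
      intro x hx
      have hxI : x ∈ Icc 0 L := Ioo_subset_Icc_self hx
      have hYx : 0 ≤ Y x := hYnn x hxI
      have hUx : 0 ≤ U x := hUnn x hxI
      have hTYle : T * Y x ≤ U x := hTle x hxI
      have hUxM : U x ≤ M := hUleM x hxI
      have h1 : D * hU x = -(U x * (r - (h₂ * U x) ^ n)) := by linarith [hsol x hx]
      have h2 : -(D * hY x) ≤ Y x * (r - (h₂ * Y x) ^ n) := by linarith [hsub x hx]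
      have h2' : T * -(D * hY x) ≤ T * (Y x * (r - (h₂ * Y x) ^ n)) :=
        mul_le_mul_of_nonneg_left h2 hT0
      have hDW : D * hW2 x ≤ -(U x * (r - (h₂ * U x) ^ n))
          + T * (Y x * (r - (h₂ * Y x) ^ n)) := by
        simp only [hhW2]
        have he : D * (hU x - T * hY x) = D * hU x + T * -(D * hY x) := by ring
        rw [he, h1]
        linarith
      -- rewrite the powers
      have hpU : (h₂ * U x) ^ n = h₂ ^ n * U x ^ n := Real.mul_rpow hh₂.le hUx
      have hpY : (h₂ * Y x) ^ n = h₂ ^ n * Y x ^ n := Real.mul_rpow hh₂.le hYx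
      have hTn : T ^ n ≤ 1 := Real.rpow_le_one hT0 hT1 hn.le
      have hTYp : (T * Y x) * (T * Y x) ^ n ≤ T * (Y x * Y x ^ n) := by
        rw [Real.mul_rpow hT0 hYx]
        have hYYn : 0 ≤ Y x * Y x ^ n := mul_nonneg hYx (Real.rpow_nonneg hYx n)
        calc (T * Y x) * (T ^ n * Y x ^ n) = T ^ n * (T * (Y x * Y x ^ n)) := by ring
          _ ≤ 1 * (T * (Y x * Y x ^ n)) :=
            mul_le_mul_of_nonneg_right hTn (mul_nonneg hT0 hYYn)
          _ = T * (Y x * Y x ^ n) := by ring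
      have hmvt : U x * U x ^ n - (T * Y x) * (T * Y x) ^ n
          ≤ (n + 1) * M ^ n * (U x - T * Y x) :=
        aux_rpow_mvt hn (mul_nonneg hT0 hYx) hTYle hUxM
      have hexp : -(U x * (r - (h₂ * U x) ^ n)) + T * (Y x * (r - (h₂ * Y x) ^ n))
          = -(r * W x) + h₂ ^ n * (U x * U x ^ n - T * (Y x * Y x ^ n)) := by
        simp only [hW]
        rw [hpU, hpY]
        ring
      have hrW : 0 ≤ r * W x := mul_nonneg hr (hWnn x hxI)
      have hh₂n : 0 ≤ h₂ ^ n := Real.rpow_nonneg hh₂.le n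
      have hchain : D * hW2 x ≤ h₂ ^ n * ((n + 1) * M ^ n * W x) := by
        rw [hexp] at hDW
        have hmid : U x * U x ^ n - T * (Y x * Y x ^ n)
            ≤ (n + 1) * M ^ n * W x := by
          have := hmvt
          simp only [hW]
          linarith [hTYp]
        nlinarith [mul_le_mul_of_nonneg_left hmid hh₂n]
      rw [hK]
      rw [div_mul_eq_mul_div, le_div_iff₀ hD]
      calc hW2 x * D = D * hW2 x := by ring
        _ ≤ h₂ ^ n * ((n + 1) * M ^ n * W x) := hchain
        _ = h₂ ^ n * (n + 1) * M ^ n * W x := by ring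
    have hbdIcc : ∀ x ∈ Icc 0 L, hW2 x ≤ K * W x :=
      aux_le_closure hL hhWc (hWc.const_smul K) hbd
    -- Case analysis
    by_cases hcase : ∀ x ∈ Ioo 0 L, 0 < W x
    · -- boundary analysis
      have hdW0 : HasDerivWithinAt W (gW 0) (Icc 0 L) 0 := by
        rw [hW, hgW]; exact hdU0.sub (hdY0.const_mul T)
      have hdWL : HasDerivWithinAt W (gW L) (Icc 0 L) L := by
        rw [hW, hgW]; exact hdUL.sub (hdYL.const_mul T)
      have hd0nn : 0 ≤ gW 0 := aux_left_deriv_nonneg hL hdW0 hWnn hW0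
      have hdLnp : gW L ≤ 0 := aux_right_deriv_nonpos hL hdWL hWnn hWL
      have hmid : L / 2 ∈ Ioo 0 L := ⟨by linarith, by linarith⟩
      have hd0pos : 0 < gW 0 := by
        rcases eq_or_lt_of_le hd0nn with h0 | h0
        · exfalso
          have := aux_gronwall_left hL hKnn hWc hgWc hhWc hdW hdgW hbdIcc hWnn hW0 h0.symm
          have h2 := hcase (L/2) hmid
          have h3 := this (L/2) (Ioo_subset_Icc_self hmid)
          linarith
        · exact h0
      have hdLneg : gW L < 0 := by
        rcases eq_or_lt_of_le hdLnp with h0 | h0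
        · exfalso
          have := aux_gronwall_right hL hKnn hWc hgWc hhWc hdW hdgW hbdIcc hWnn hWL h0
          have h2 := hcase (L/2) hmid
          have h3 := this (L/2) (Ioo_subset_Icc_self hmid)
          linarith
        · exact h0
      -- find η, η' where gW is large near the endpoints
      obtain ⟨δ, hδ, hδsub⟩ : ∃ δ > 0, ∀ x ∈ Icc 0 L, |x - 0| < δ → gW 0 / 2 < gW x := by
        have hcw : ContinuousWithinAt gW (Icc 0 L) 0 :=
          hgWc 0 (left_mem_Icc.2 hL.le)
        have hhalf : gW 0 / 2 < gW 0 := half_lt_self hd0pos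
        have hev : ∀ᶠ x in 𝓝[Icc 0 L] 0, gW 0 / 2 < gW x :=
          hcw.eventually_const_lt hhalf
        obtain ⟨δ, hδ, h⟩ := Metric.mem_nhdsWithin_iff.1 hev
        refine ⟨δ, hδ, fun x hx hd => h ⟨?_, hx⟩⟩
        simpa [Metric.mem_ball, Real.dist_eq] using hd
      obtain ⟨δ', hδ', hδ'sub⟩ : ∃ δ > 0, ∀ x ∈ Icc 0 L, |x - L| < δ → gW x < gW L / 2 := by
        have hcw : ContinuousWithinAt gW (Icc 0 L) L :=
          hgWc L (right_mem_Icc.2 hL.le)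
        have hhalf : gW L < gW L / 2 := by linarith
        have hev : ∀ᶠ x in 𝓝[Icc 0 L] L, gW x < gW L / 2 :=
          hcw.eventually_lt_const hhalf
        obtain ⟨δ, hδ, h⟩ := Metric.mem_nhdsWithin_iff.1 hev
        refine ⟨δ, hδ, fun x hx hd => h ⟨?_, hx⟩⟩
        simpa [Metric.mem_ball, Real.dist_eq] using hd
      set η : ℝ := min (δ/2) (L/2) with hη
      set η' : ℝ := min (δ'/2) (L/2) with hη'
      have hηpos : 0 < η := lt_min (by linarith) (by linarith)
      have hη'pos : 0 < η' := lt_min (by linarith) (by linarith)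
      have hηL : η ≤ L/2 := min_le_right _ _
      have hη'L : η' ≤ L/2 := min_le_right _ _
      -- lower bound for W near 0
      have hWlow0 : ∀ x ∈ Icc 0 η, gW 0 / 2 * x ≤ W x := by
        intro x hx
        have hxL : x ∈ Icc 0 L := ⟨hx.1, hx.2.trans (by linarith)⟩
        have h1 : ∫ t in (0:ℝ)..x, gW t = W x - W 0 :=
          aux_ftc le_rfl hx.1 hxL.2 hWc hgWc hdW
        have h2 : (∫ t in (0:ℝ)..x, (gW 0 / 2 : ℝ)) ≤ ∫ t in (0:ℝ)..x, gW t := by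
          apply intervalIntegral.integral_mono_on hx.1 intervalIntegrable_const
          · apply ContinuousOn.intervalIntegrable
            rw [uIcc_of_le hx.1]
            exact hgWc.mono (Icc_subset_Icc le_rfl hxL.2)
          · intro t ht
            have htL : t ∈ Icc 0 L := ⟨ht.1, ht.2.trans hxL.2⟩
            have habs : |t - 0| < δ := by
              rw [sub_zero, abs_of_nonneg ht.1]
              calc t ≤ x := ht.2
                _ ≤ η := hx.2
                _ ≤ δ/2 := min_le_left _ _
                _ < δ := by linarith
            exact (hδsub t htL habs).le
        rw [h1, hW0, sub_zero, intervalIntegral.integral_const, smul_eq_mul, sub_zero] at h2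
        linarith [h2]
      -- lower bound for W near L
      have hWlowL : ∀ x ∈ Icc (L - η') L, -(gW L) / 2 * (L - x) ≤ W x := by
        intro x hx
        have hx0 : 0 ≤ x := le_trans (by linarith [hη'L, hL]) hx.1
        have hxL : x ∈ Icc 0 L := ⟨hx0, hx.2⟩
        have h1 : ∫ t in x..L, gW t = W L - W x :=
          aux_ftc hx0 hx.2 le_rfl hWc hgWc hdW
        have h2 : (∫ t in x..L, gW t) ≤ ∫ t in x..L, (gW L / 2 : ℝ) := by
          apply intervalIntegral.integral_mono_on hx.2
          · apply ContinuousOn.intervalIntegrable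
            rw [uIcc_of_le hx.2]
            exact hgWc.mono (Icc_subset_Icc hx0 le_rfl)
          · exact intervalIntegrable_const
          · intro t ht
            have htL : t ∈ Icc 0 L := ⟨hx0.trans ht.1, ht.2⟩
            have habs : |t - L| < δ' := by
              rw [abs_of_nonpos (by linarith [ht.2])]
              have h4 : L - η' ≤ t := hx.1.trans ht.1
              have h5 : η' ≤ δ'/2 := min_le_left _ _
              linarith
            exact (hδ'sub t htL habs).le
        rw [h1, hWL, zero_sub, intervalIntegral.integral_const, smul_eq_mul] at h2
        nlinarith [h2]
      -- upper bounds for Y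
      obtain ⟨C₀, hC₀⟩ := isCompact_Icc.exists_bound_of_continuousOn hgYc
      set CY : ℝ := |C₀| + 1 with hCY
      have hCYpos : 0 < CY := by positivity
      have hgYb : ∀ x ∈ Icc 0 L, -CY ≤ gY x ∧ gY x ≤ CY := by
        intro x hx
        have := hC₀ x hx
        rw [Real.norm_eq_abs] at this
        have h1 := abs_le.1 this
        have h2 := le_abs_self C₀
        have h3 := neg_abs_le C₀
        rw [hCY]
        exact ⟨by linarith [h1.1], by linarith [h1.2]⟩
      have hYub0 : ∀ x ∈ Icc 0 L, Y x ≤ CY * x := by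
        intro x hx
        have h1 : ∫ t in (0:ℝ)..x, gY t = Y x - Y 0 :=
          aux_ftc le_rfl hx.1 hx.2 hYc hgYc hdY
        have h2 : (∫ t in (0:ℝ)..x, gY t) ≤ ∫ t in (0:ℝ)..x, (CY : ℝ) := by
          apply intervalIntegral.integral_mono_on hx.1
          · apply ContinuousOn.intervalIntegrable
            rw [uIcc_of_le hx.1]
            exact hgYc.mono (Icc_subset_Icc le_rfl hx.2)
          · exact intervalIntegrable_const
          · intro t ht
            exact (hgYb t ⟨ht.1, ht.2.trans hx.2⟩).2
        rw [h1, hY0, sub_zero, intervalIntegral.integral_const, smul_eq_mul, sub_zero] at h2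
        linarith [h2]
      have hYubL : ∀ x ∈ Icc 0 L, Y x ≤ CY * (L - x) := by
        intro x hx
        have h1 : ∫ t in x..L, gY t = Y L - Y x :=
          aux_ftc hx.1 hx.2 le_rfl hYc hgYc hdY
        have h2 : (∫ t in x..L, (-CY : ℝ)) ≤ ∫ t in x..L, gY t := by
          apply intervalIntegral.integral_mono_on hx.2
          · exact intervalIntegrable_const
          · apply ContinuousOn.intervalIntegrable
            rw [uIcc_of_le hx.2]
            exact hgYc.mono (Icc_subset_Icc hx.1 le_rfl)
          · intro t ht
            exact (hgYb t ⟨hx.1.trans ht.1, ht.2⟩).1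
        rw [h1, hYL, zero_sub, intervalIntegral.integral_const, smul_eq_mul] at h2
        nlinarith [h2]
      -- global bound for Y
      obtain ⟨xY, hxY, hxYmax⟩ := isCompact_Icc.exists_isMaxOn (nonempty_Icc.2 hL.le) hYc
      set MY : ℝ := Y xY + 1 with hMY
      have hMYpos : 0 < MY := by
        have := hYnn xY hxY
        linarith
      have hYleMY : ∀ x ∈ Icc 0 L, Y x ≤ MY := by
        intro x hx
        have h7 : Y x ≤ Y xY := hxYmax hx
        rw [hMY]
        linarith
      -- minimum of W on the middle region
      have hmidne : (Icc η (L - η')).Nonempty := by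
        rw [nonempty_Icc]
        linarith [hηL, hη'L]
      obtain ⟨xm, hxm, hxmmin⟩ := isCompact_Icc.exists_isMinOn hmidne
        (hWc.mono (Icc_subset_Icc (by linarith) (by linarith)))
      set m : ℝ := W xm with hm
      have hmpos : 0 < m := by
        rw [hm]
        apply hcase
        constructor
        · exact lt_of_lt_of_le hηpos hxm.1
        · exact lt_of_le_of_lt hxm.2 (by linarith [hη'pos])
      -- define ε
      set ε : ℝ := min (min (gW 0 / 2 / CY) (-(gW L) / 2 / CY)) (min (m / MY) (1 - T)) with hε
      have hεpos : 0 < ε := by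
        apply lt_min (lt_min (div_pos (half_pos hd0pos) hCYpos) ?_)
        · apply lt_min (div_pos hmpos hMYpos)
          linarith
        · apply div_pos _ hCYpos
          linarith
      have hεle1T : ε ≤ 1 - T := le_trans (min_le_right _ _) (min_le_right _ _)
      -- the pushed constant is still in S
      have hTεS : T + ε ∈ S := by
        refine ⟨⟨by linarith, by linarith⟩, fun x hx => ?_⟩
        have hkey : ε * Y x ≤ W x := by
          rcases le_or_gt x η with hc1 | hc1
          · -- near 0
            have hY1 : Y x ≤ CY * x := hYub0 x hx
            have hε1 : ε ≤ gW 0 / 2 / CY :=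
              le_trans (min_le_left _ _) (min_le_left _ _)
            have hW1 : gW 0 / 2 * x ≤ W x := hWlow0 x ⟨hx.1, hc1⟩
            have hYx := hYnn x hx
            calc ε * Y x ≤ ε * (CY * x) :=
                mul_le_mul_of_nonneg_left hY1 hεpos.le
              _ ≤ gW 0 / 2 / CY * (CY * x) := by
                apply mul_le_mul_of_nonneg_right hε1
                exact mul_nonneg hCYpos.le hx.1
              _ = gW 0 / 2 * x := by
                field_simp
              _ ≤ W x := hW1
          rcases le_or_gt (L - η') x with hc2 | hc2
          · -- near L
            have hY1 : Y x ≤ CY * (L - x) := hYubL x hx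
            have hε1 : ε ≤ -(gW L) / 2 / CY :=
              le_trans (min_le_left _ _) (min_le_right _ _)
            have hW1 : -(gW L) / 2 * (L - x) ≤ W x := hWlowL x ⟨hc2, hx.2⟩
            calc ε * Y x ≤ ε * (CY * (L - x)) :=
                mul_le_mul_of_nonneg_left hY1 hεpos.le
              _ ≤ -(gW L) / 2 / CY * (CY * (L - x)) := by
                apply mul_le_mul_of_nonneg_right hε1
                have h3 : 0 ≤ L - x := by linarith [hx.2]
                exact mul_nonneg hCYpos.le h3
              _ = -(gW L) / 2 * (L - x) := by
                field_simp
              _ ≤ W x := hW1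
          · -- middle
            have hε1 : ε ≤ m / MY :=
              le_trans (min_le_right _ _) (min_le_left _ _)
            have hY1 : Y x ≤ MY := hYleMY x hx
            have hW1 : m ≤ W x := hxmmin ⟨hc1.le, hc2.le⟩
            calc ε * Y x ≤ ε * MY := mul_le_mul_of_nonneg_left hY1 hεpos.le
              _ ≤ m / MY * MY := mul_le_mul_of_nonneg_right hε1 hMYpos.le
              _ = m := by field_simp
              _ ≤ W x := hW1
        have h5 := hTle x hx
        simp only [hW] at hkey
        have h6 : (T + ε) * Y x = T * Y x + ε * Y x := by ring
        rw [h6]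
        linarith
      have := le_csSup hSbdd hTεS
      rw [← hT] at this
      linarith
    · -- interior touching point
      push_neg at hcase
      obtain ⟨x₀, hx₀, hWx₀⟩ := hcase
      have hWeq : W x₀ = 0 := le_antisymm hWx₀ (hWnn x₀ (Ioo_subset_Icc_self hx₀))
      have hmin : IsLocalMin W x₀ := by
        apply Filter.eventually_of_mem (Icc_mem_nhds hx₀.1 hx₀.2)
        intro y hy
        rw [hWeq]
        exact hWnn y hy
      have h2nn : 0 ≤ hW2 x₀ :=
        aux_deriv2_nonneg hx₀ hdW (hdgW x₀ hx₀) hmin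
      -- now the ODE gives a strict negativity
      have hUx₀ : 0 < U x₀ := hUpos x₀ hx₀
      have hUY : U x₀ = T * Y x₀ := by
        have h9 : U x₀ - T * Y x₀ = 0 := by rw [hW] at hWeq; exact hWeq
        linarith
      have hYx₀pos : 0 < Y x₀ := by
        rcases le_or_gt (Y x₀) 0 with h | h
        · exfalso
          nlinarith [mul_nonpos_of_nonneg_of_nonpos hT0 h]
        · exact h
      have hTpos : 0 < T := by
        rcases le_or_gt T 0 with h | h
        · exfalso
          nlinarith [mul_nonpos_of_nonpos_of_nonneg h hYx₀pos.le]
        · exact h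
      have h1 : D * hU x₀ = -(U x₀ * (r - (h₂ * U x₀) ^ n)) := by linarith [hsol x₀ hx₀]
      have h2 : -(D * hY x₀) ≤ Y x₀ * (r - (h₂ * Y x₀) ^ n) := by linarith [hsub x₀ hx₀]
      have hDW : D * hW2 x₀ ≤ -(U x₀ * (r - (h₂ * U x₀) ^ n))
          + T * (Y x₀ * (r - (h₂ * Y x₀) ^ n)) := by
        simp only [hhW2]
        have he : D * (hU x₀ - T * hY x₀) = D * hU x₀ + T * -(D * hY x₀) := by ring
        rw [he, h1]
        nlinarith [mul_le_mul_of_nonneg_left h2 hT0]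
      have hstrict : (h₂ * (T * Y x₀)) ^ n < (h₂ * Y x₀) ^ n := by
        apply Real.rpow_lt_rpow (by positivity) _ hn
        have : T * Y x₀ < Y x₀ := by nlinarith
        nlinarith
      have hfinal : -(U x₀ * (r - (h₂ * U x₀) ^ n))
          + T * (Y x₀ * (r - (h₂ * Y x₀) ^ n)) < 0 := by
        rw [hUY]
        have hexp : -(T * Y x₀ * (r - (h₂ * (T * Y x₀)) ^ n))
            + T * (Y x₀ * (r - (h₂ * Y x₀) ^ n))
            = T * Y x₀ * ((h₂ * (T * Y x₀)) ^ n - (h₂ * Y x₀) ^ n) := by ring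
        rw [hexp]
        apply mul_neg_of_pos_of_neg (by positivity)
        linarith
      nlinarith [mul_nonneg hD.le h2nn]
  intro x hx
  have := hTle x hx
  rw [hTeq, one_mul] at this
  exact this
/-- Corollary 1, case c = 0, invasibility: `U₁`, `U₂` positive Dirichlet
stationary states of `Dᵢ Uᵢ'' + Uᵢ(rᵢ − (ĥᵢUᵢ)ⁿ) = 0` on `[0, L₀]`. If `r₂/r₁ ≥ D₂/D₁`
and `(r₂/r₁)^{1/n} ĥ₁ ≥ ĝ₂`, then `ĝ₂ U₁ ≤ ĥ₂ U₂` on `[0, L₀]`. -/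
theorem stmt11 (D₁ D₂ r₁ r₂ hhat₁ hhat₂ ghat₂ n L₀ : ℝ)
    (hD₁ : 0 < D₁) (hD₂ : 0 < D₂) (hr₁ : 0 < r₁) (hr₂ : 0 < r₂)
    (hh₁ : 0 < hhat₁) (hh₂ : 0 < hhat₂) (hg₂ : 0 < ghat₂) (hn : 0 < n) (hL₀ : 0 < L₀)
    (U₁ U₂ : ℝ → ℝ)
    (hreg₁ : ContDiffOn ℝ 2 U₁ (Icc 0 L₀)) (hreg₂ : ContDiffOn ℝ 2 U₂ (Icc 0 L₀))
    (hbc₁ : U₁ 0 = 0 ∧ U₁ L₀ = 0) (hbc₂ : U₂ 0 = 0 ∧ U₂ L₀ = 0)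
    (hpos₁ : ∀ ξ ∈ Ioo 0 L₀, 0 < U₁ ξ) (hpos₂ : ∀ ξ ∈ Ioo 0 L₀, 0 < U₂ ξ)
    (hode₁ : ∀ ξ ∈ Ioo 0 L₀,
      D₁ * deriv (deriv U₁) ξ + U₁ ξ * (r₁ - (hhat₁ * U₁ ξ) ^ n) = 0)
    (hode₂ : ∀ ξ ∈ Ioo 0 L₀,
      D₂ * deriv (deriv U₂) ξ + U₂ ξ * (r₂ - (hhat₂ * U₂ ξ) ^ n) = 0)
    (hrD : D₂ / D₁ ≤ r₂ / r₁)
    (hgh : ghat₂ ≤ (r₂ / r₁) ^ (1 / n) * hhat₁) :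
    ∀ ξ ∈ Icc 0 L₀, ghat₂ * U₁ ξ ≤ hhat₂ * U₂ ξ := by
  obtain ⟨hbc10, hbc1L⟩ := hbc₁
  obtain ⟨hbc20, hbc2L⟩ := hbc₂
  have huniq : UniqueDiffOn ℝ (Icc (0:ℝ) L₀) := uniqueDiffOn_Icc hL₀
  have h0mem : (0:ℝ) ∈ Icc (0:ℝ) L₀ := left_mem_Icc.2 hL₀.le
  have hLmem : L₀ ∈ Icc (0:ℝ) L₀ := right_mem_Icc.2 hL₀.le
  have h12 : (1:WithTop ℕ∞) + 1 ≤ 2 := by norm_num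
  -- scaffolding for U₁
  set g₁ : ℝ → ℝ := derivWithin U₁ (Icc 0 L₀) with hg₁def
  have hg₁cd : ContDiffOn ℝ 1 g₁ (Icc 0 L₀) := hreg₁.derivWithin huniq h12
  have hg₁c : ContinuousOn g₁ (Icc 0 L₀) := hg₁cd.continuousOn
  set k₁ : ℝ → ℝ := derivWithin g₁ (Icc 0 L₀) with hk₁def
  have hk₁c : ContinuousOn k₁ (Icc 0 L₀) := hg₁cd.continuousOn_derivWithin huniq le_rfl
  have hU₁c : ContinuousOn U₁ (Icc 0 L₀) := hreg₁.continuousOn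
  have hdiff₁ : DifferentiableOn ℝ U₁ (Icc 0 L₀) := hreg₁.differentiableOn two_ne_zero
  have hgdiff₁ : DifferentiableOn ℝ g₁ (Icc 0 L₀) := hg₁cd.differentiableOn one_ne_zero
  have hd₁ : ∀ x ∈ Ioo 0 L₀, HasDerivAt U₁ (g₁ x) x := by
    intro x hx
    have hmem : Icc (0:ℝ) L₀ ∈ 𝓝 x := Icc_mem_nhds hx.1 hx.2
    have hda : DifferentiableAt ℝ U₁ x :=
      (hdiff₁ x (Ioo_subset_Icc_self hx)).differentiableAt hmem
    have heq : g₁ x = deriv U₁ x := derivWithin_of_mem_nhds hmem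
    rw [heq]
    exact hda.hasDerivAt
  have hdg₁ : ∀ x ∈ Ioo 0 L₀, HasDerivAt g₁ (k₁ x) x := by
    intro x hx
    have hmem : Icc (0:ℝ) L₀ ∈ 𝓝 x := Icc_mem_nhds hx.1 hx.2
    have hda : DifferentiableAt ℝ g₁ x :=
      (hgdiff₁ x (Ioo_subset_Icc_self hx)).differentiableAt hmem
    have heq : k₁ x = deriv g₁ x := derivWithin_of_mem_nhds hmem
    rw [heq]
    exact hda.hasDerivAt
  have hd2eq₁ : ∀ x ∈ Ioo 0 L₀, k₁ x = deriv (deriv U₁) x := by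
    intro x hx
    have hmem : Icc (0:ℝ) L₀ ∈ 𝓝 x := Icc_mem_nhds hx.1 hx.2
    have h1 : k₁ x = deriv g₁ x := derivWithin_of_mem_nhds hmem
    have h2 : deriv g₁ x = deriv (deriv U₁) x := by
      apply Filter.EventuallyEq.deriv_eq
      filter_upwards [Ioo_mem_nhds hx.1 hx.2] with y hy
      exact derivWithin_of_mem_nhds (Icc_mem_nhds hy.1 hy.2)
    rw [h1, h2]
  have hode₁' : ∀ x ∈ Ioo 0 L₀,
      D₁ * k₁ x + U₁ x * (r₁ - (hhat₁ * U₁ x) ^ n) = 0 := by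
    intro x hx
    rw [hd2eq₁ x hx]
    exact hode₁ x hx
  have hdw₁0 : HasDerivWithinAt U₁ (g₁ 0) (Icc 0 L₀) 0 :=
    (hdiff₁ 0 h0mem).hasDerivWithinAt
  have hdw₁L : HasDerivWithinAt U₁ (g₁ L₀) (Icc 0 L₀) L₀ :=
    (hdiff₁ L₀ hLmem).hasDerivWithinAt
  -- scaffolding for U₂
  set g₂ : ℝ → ℝ := derivWithin U₂ (Icc 0 L₀) with hg₂def
  have hg₂cd : ContDiffOn ℝ 1 g₂ (Icc 0 L₀) := hreg₂.derivWithin huniq h12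
  have hg₂c : ContinuousOn g₂ (Icc 0 L₀) := hg₂cd.continuousOn
  set k₂ : ℝ → ℝ := derivWithin g₂ (Icc 0 L₀) with hk₂def
  have hk₂c : ContinuousOn k₂ (Icc 0 L₀) := hg₂cd.continuousOn_derivWithin huniq le_rfl
  have hU₂c : ContinuousOn U₂ (Icc 0 L₀) := hreg₂.continuousOn
  have hdiff₂ : DifferentiableOn ℝ U₂ (Icc 0 L₀) := hreg₂.differentiableOn two_ne_zero
  have hgdiff₂ : DifferentiableOn ℝ g₂ (Icc 0 L₀) := hg₂cd.differentiableOn one_ne_zero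
  have hd₂ : ∀ x ∈ Ioo 0 L₀, HasDerivAt U₂ (g₂ x) x := by
    intro x hx
    have hmem : Icc (0:ℝ) L₀ ∈ 𝓝 x := Icc_mem_nhds hx.1 hx.2
    have hda : DifferentiableAt ℝ U₂ x :=
      (hdiff₂ x (Ioo_subset_Icc_self hx)).differentiableAt hmem
    have heq : g₂ x = deriv U₂ x := derivWithin_of_mem_nhds hmem
    rw [heq]
    exact hda.hasDerivAt
  have hdg₂ : ∀ x ∈ Ioo 0 L₀, HasDerivAt g₂ (k₂ x) x := by
    intro x hx
    have hmem : Icc (0:ℝ) L₀ ∈ 𝓝 x := Icc_mem_nhds hx.1 hx.2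
    have hda : DifferentiableAt ℝ g₂ x :=
      (hgdiff₂ x (Ioo_subset_Icc_self hx)).differentiableAt hmem
    have heq : k₂ x = deriv g₂ x := derivWithin_of_mem_nhds hmem
    rw [heq]
    exact hda.hasDerivAt
  have hd2eq₂ : ∀ x ∈ Ioo 0 L₀, k₂ x = deriv (deriv U₂) x := by
    intro x hx
    have hmem : Icc (0:ℝ) L₀ ∈ 𝓝 x := Icc_mem_nhds hx.1 hx.2
    have h1 : k₂ x = deriv g₂ x := derivWithin_of_mem_nhds hmem
    have h2 : deriv g₂ x = deriv (deriv U₂) x := by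
      apply Filter.EventuallyEq.deriv_eq
      filter_upwards [Ioo_mem_nhds hx.1 hx.2] with y hy
      exact derivWithin_of_mem_nhds (Icc_mem_nhds hy.1 hy.2)
    rw [h1, h2]
  have hode₂' : ∀ x ∈ Ioo 0 L₀,
      D₂ * k₂ x + U₂ x * (r₂ - (hhat₂ * U₂ x) ^ n) = 0 := by
    intro x hx
    rw [hd2eq₂ x hx]
    exact hode₂ x hx
  have hdw₂0 : HasDerivWithinAt U₂ (g₂ 0) (Icc 0 L₀) 0 :=
    (hdiff₂ 0 h0mem).hasDerivWithinAt
  have hdw₂L : HasDerivWithinAt U₂ (g₂ L₀) (Icc 0 L₀) L₀ :=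
    (hdiff₂ L₀ hLmem).hasDerivWithinAt
  -- nonnegativity of U₁
  have hU₁nn : ∀ x ∈ Icc 0 L₀, 0 ≤ U₁ x := by
    intro x hx
    rcases eq_or_lt_of_le hx.1 with h0 | h0
    · rw [← h0, hbc10]
    rcases eq_or_lt_of_le hx.2 with hL' | hL'
    · rw [hL', hbc1L]
    exact (hpos₁ x ⟨h0, hL'⟩).le
  -- maximum principle bound : (hhat₁ U₁)ⁿ ≤ r₁ on [0,L₀]
  have hmaxbd : ∀ x ∈ Icc 0 L₀, (hhat₁ * U₁ x) ^ n ≤ r₁ := by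
    obtain ⟨xm, hxm, hxmmax⟩ := isCompact_Icc.exists_isMaxOn
      (nonempty_Icc.2 hL₀.le) hU₁c
    have hmid : L₀ / 2 ∈ Ioo 0 L₀ := ⟨by linarith, by linarith⟩
    have hU₁xmpos : 0 < U₁ xm := by
      have h1 : U₁ (L₀/2) ≤ U₁ xm := hxmmax (Ioo_subset_Icc_self hmid)
      have h2 := hpos₁ (L₀/2) hmid
      linarith
    have hxmIoo : xm ∈ Ioo 0 L₀ := by
      constructor
      · rcases eq_or_lt_of_le hxm.1 with h0 | h0
        · exfalso; rw [← h0] at hU₁xmpos; rw [hbc10] at hU₁xmpos; exact lt_irrefl 0 hU₁xmpos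
        · exact h0
      · rcases eq_or_lt_of_le hxm.2 with hL' | hL'
        · exfalso; rw [hL'] at hU₁xmpos; rw [hbc1L] at hU₁xmpos; exact lt_irrefl 0 hU₁xmpos
        · exact hL'
    have hlocmax : IsLocalMax U₁ xm :=
      hxmmax.isLocalMax (Icc_mem_nhds hxmIoo.1 hxmIoo.2)
    have hk₁neg : k₁ xm ≤ 0 :=
      aux_deriv2_nonpos hxmIoo hd₁ (hdg₁ xm hxmIoo) hlocmax
    have hodexm := hode₁' xm hxmIoo
    have hple : (hhat₁ * U₁ xm) ^ n ≤ r₁ := by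
      nlinarith [mul_nonpos_of_nonneg_of_nonpos hD₁.le hk₁neg]
    intro x hx
    have h1 : hhat₁ * U₁ x ≤ hhat₁ * U₁ xm :=
      mul_le_mul_of_nonneg_left (hxmmax hx) hh₁.le
    have h2 : (0:ℝ) ≤ hhat₁ * U₁ x := mul_nonneg hh₁.le (hU₁nn x hx)
    exact le_trans (Real.rpow_le_rpow h2 h1 hn.le) hple
  -- the rescaled subsolution
  set ρ : ℝ := r₂ / r₁ with hρdef
  have hρpos : 0 < ρ := div_pos hr₂ hr₁
  set A : ℝ := ρ ^ (1/n) * hhat₁ / hhat₂ with hAdef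
  have hρn : 0 < ρ ^ (1/n) := Real.rpow_pos_of_pos hρpos _
  have hApos : 0 < A := div_pos (mul_pos hρn hh₁) hh₂
  have hh₂A : hhat₂ * A = ρ ^ (1/n) * hhat₁ := by
    rw [hAdef]
    field_simp
  have hpowA : ∀ u : ℝ, 0 ≤ u → (hhat₂ * (A * u)) ^ n = ρ * (hhat₁ * u) ^ n := by
    intro u hu
    have h1 : hhat₂ * (A * u) = ρ ^ (1/n) * (hhat₁ * u) := by
      rw [← mul_assoc, hh₂A]; ring
    rw [h1, Real.mul_rpow hρn.le (mul_nonneg hh₁.le hu)]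
    congr 1
    rw [← Real.rpow_mul hρpos.le, one_div_mul_cancel hn.ne', Real.rpow_one]
  -- subsolution property
  have hsub : ∀ x ∈ Ioo 0 L₀,
      0 ≤ D₂ * (A * k₁ x) + (A * U₁ x) * (r₂ - (hhat₂ * (A * U₁ x)) ^ n) := by
    intro x hx
    have hu : 0 ≤ U₁ x := hU₁nn x (Ioo_subset_Icc_self hx)
    have hp : (hhat₁ * U₁ x) ^ n ≤ r₁ := hmaxbd x (Ioo_subset_Icc_self hx)
    have hode := hode₁' x hx
    rw [hpowA (U₁ x) hu]
    -- D₁ * k₁ x = -(U₁ x * (r₁ - p))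
    have hk : D₁ * k₁ x = -(U₁ x * (r₁ - (hhat₁ * U₁ x) ^ n)) := by linarith
    have hkval : k₁ x = -(U₁ x * (r₁ - (hhat₁ * U₁ x) ^ n)) / D₁ := by
      field_simp at hk ⊢
      linarith
    rw [hkval]
    set p : ℝ := (hhat₁ * U₁ x) ^ n with hpdef
    have hr₂eq : r₂ = ρ * r₁ := by
      rw [hρdef]; field_simp
    have hδρ : D₂ / D₁ ≤ ρ := hrD
    have hkey : D₂ * (A * (-(U₁ x * (r₁ - p)) / D₁)) + A * U₁ x * (r₂ - ρ * p)
        = A * U₁ x * ((ρ - D₂ / D₁) * (r₁ - p)) := by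
      rw [hr₂eq]
      field_simp
      ring
    rw [hkey]
    apply mul_nonneg (mul_nonneg hApos.le hu)
    apply mul_nonneg (by linarith) (by linarith)
  -- apply the comparison principle
  have hcomp : ∀ x ∈ Icc 0 L₀, A * U₁ x ≤ U₂ x := by
    apply aux_sweep hL₀ hD₂ hr₂.le hh₂ hn hU₂c (hU₁c.const_smul A)
      hg₂c (hg₁c.const_smul A) hk₂c (hk₁c.const_smul A)
      hd₂ hdg₂
      (fun x hx => (hd₁ x hx).const_mul A) (fun x hx => (hdg₁ x hx).const_mul A)
      hdw₂0 hdw₂L (hdw₁0.const_mul A) (hdw₁L.const_mul A)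
      hbc20 hbc2L (by simp [hbc10]) (by simp [hbc1L])
      hpos₂ (fun x hx => mul_nonneg hApos.le (hU₁nn x hx))
      hode₂' hsub
  -- conclusion
  intro x hx
  have h1 : ghat₂ * U₁ x ≤ ρ ^ (1/n) * hhat₁ * U₁ x :=
    mul_le_mul_of_nonneg_right hgh (hU₁nn x hx)
  have h2 : ρ ^ (1/n) * hhat₁ * U₁ x = hhat₂ * (A * U₁ x) := by
    rw [← mul_assoc, hh₂A]
  have h3 : hhat₂ * (A * U₁ x) ≤ hhat₂ * U₂ x :=
    mul_le_mul_of_nonneg_left (hcomp x hx) hh₂.le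
  calc ghat₂ * U₁ x ≤ ρ ^ (1/n) * hhat₁ * U₁ x := h1
    _ = hhat₂ * (A * U₁ x) := h2
    _ ≤ hhat₂ * U₂ x := h3
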